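/- The 'elegant generation' of the free boundary state: in the fermionic Fock space, exp(X(v,t))|0⟩ = Σ_S t^{C(S)/2} v^{H(S)} |S⟩, where the sum runs over all admissible subsets S of ℤ+1/2 with even charge, X(v,t) := Σ_{k>ℓ} ψ̃_k(v,t) ψ̃_ℓ(v,t) with ψ̃_i(v,t) = t^{1/2} v^i ψ_i for i > 0 and ψ̃_i(v,t) = (−1)^{i+1/2} t^{−1/2} v^{−i} ψ_i^* for i < 0. -/

import Mathlib

noncomputable section
open Classical

/-!
Statement 14: `exp(X(v,t)) |0⟩ = Σ_{S : C(S) even} t^{C(S)/2} v^{H(S)} |S⟩`, where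
`X(v,t) = Σ_{k>ℓ} ψ̃_k(v,t) ψ̃_ℓ(v,t)`, `ψ̃_i = t^{1/2} v^i ψ_i` for `i > 0` and
`ψ̃_i = (−1)^{i+1/2} t^{−1/2} v^{−i} ψ_i^*` for `i < 0`.

The fermionic Fock space is modelled by coefficient functions `f : Set ℤ → ℂ` on subsets
of `ℤ' = ℤ + 1/2` (the half-integer `m + 1/2` being encoded by `m : ℤ`), with
`f S = ⟨S|f⟩`; the fermionic operators act on coefficient functions by
`(ψ_k f)(T) = [k∈T] (−1)^{|T ∩ ℤ'_{>k}|} f(T∖{k})` and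
`(ψ_k^* f)(T) = [k∉T] (−1)^{|T ∩ ℤ'_{>k}|} f(T∪{k})`.
The identity is stated coefficient-wise at every admissible `T`, the exponential being
`Σ_{m≥0} X^m/m!`.
-/

def posPart (S : Set ℤ) : Set ℤ := S ∩ {m | 0 ≤ m}
def negPart (S : Set ℤ) : Set ℤ := {m | m < 0} \ S
def Admissible (S : Set ℤ) : Prop := (posPart S).Finite ∧ (negPart S).Finite

/-- The charge `C(S) = |S₊| − |S₋|`. -/
noncomputable def charge (S : Set ℤ) : ℤ :=
  ((posPart S).ncard : ℤ) - ((negPart S).ncard : ℤ)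

/-- The energy `H(S) = Σ_{k∈S₊} k − Σ_{k∈S₋} k` (recall `m : ℤ` encodes `m + 1/2`). -/
noncomputable def energy (S : Set ℤ) : ℝ :=
  (∑ᶠ m ∈ posPart S, ((m : ℝ) + 1/2)) - ∑ᶠ m ∈ negPart S, ((m : ℝ) + 1/2)

/-- `|S ∩ ℤ'_{>k}|`, the exponent in the fermionic sign. -/
noncomputable def jcount (S : Set ℤ) (k : ℤ) : ℕ := (S ∩ {m | k < m}).ncard

/-- Action of `ψ_k` on coefficient functions. -/
noncomputable def psiAct (k : ℤ) (f : Set ℤ → ℂ) : Set ℤ → ℂ := fun T =>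
  if k ∈ T then (-1 : ℂ) ^ jcount T k * f (T \ {k}) else 0

/-- Action of `ψ_k^*` on coefficient functions. -/
noncomputable def psiStarAct (k : ℤ) (f : Set ℤ → ℂ) : Set ℤ → ℂ := fun T =>
  if k ∉ T then (-1 : ℂ) ^ jcount T k * f (insert k T) else 0

/-- `ψ̃_k(v,t)`: here `k : ℤ` encodes the half-integer `k + 1/2`, so `k ≥ 0` is the
positive case with scalar `t^{1/2} v^{k+1/2}` and `k < 0` the negative case with scalar
`(−1)^{k+1/2+1/2} t^{−1/2} v^{−(k+1/2)}`. -/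
noncomputable def psitAct (v t : ℝ) (k : ℤ) (f : Set ℤ → ℂ) : Set ℤ → ℂ := fun T =>
  if 0 ≤ k then
    ((Real.sqrt t * v ^ ((k : ℝ) + 1/2) : ℝ) : ℂ) * psiAct k f T
  else
    (-1 : ℂ) ^ (k + 1) * (((Real.sqrt t)⁻¹ * v ^ (-(k : ℝ) - 1/2) : ℝ) : ℂ) *
      psiStarAct k f T

/-- The operator `X(v,t) = Σ_{k>ℓ} ψ̃_k(v,t) ψ̃_ℓ(v,t)`, acting coefficient-wise. -/
noncomputable def XAct (v t : ℝ) (f : Set ℤ → ℂ) : Set ℤ → ℂ := fun T =>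
  ∑' q : ℤ × ℤ, if q.2 < q.1 then psitAct v t q.1 (psitAct v t q.2 f) T else 0

/-- The vacuum `|0⟩`, i.e. the basis vector at `S = ℤ'_{<0}`. -/
noncomputable def vacVec : Set ℤ → ℂ := fun T => if T = {m : ℤ | m < 0} then 1 else 0

/-- Coefficient of `Σ_{S : C(S) even} t^{C(S)/2} v^{H(S)} |S⟩` at `S`. -/
noncomputable def fbCoeff (v t : ℝ) (S : Set ℤ) : ℂ :=
  if Even (charge S) then ((t ^ (charge S / 2) * v ^ energy S : ℝ) : ℂ) else 0

def excSet (T : Set ℤ) : Set ℤ := posPart T ∪ negPart T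

lemma mem_posPart {T : Set ℤ} {k : ℤ} : k ∈ posPart T ↔ k ∈ T ∧ 0 ≤ k := Iff.rfl

lemma mem_negPart {T : Set ℤ} {k : ℤ} : k ∈ negPart T ↔ k < 0 ∧ k ∉ T := Iff.rfl

lemma posPart_negPart_disjoint (T : Set ℤ) : Disjoint (posPart T) (negPart T) := by
  rw [Set.disjoint_left]; rintro a ⟨_, h0⟩ ⟨h1, _⟩; exact (not_lt.2 (show (0:ℤ) ≤ a from h0)) h1

lemma excSet_finite {T : Set ℤ} (hT : Admissible T) : (excSet T).Finite :=
  hT.1.union hT.2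

lemma mem_excSet_nonneg {T : Set ℤ} {k : ℤ} (hk : 0 ≤ k) : k ∈ excSet T ↔ k ∈ T := by
  simp only [excSet, Set.mem_union, mem_posPart, mem_negPart]
  constructor
  · rintro (⟨h, _⟩ | ⟨h, h'⟩)
    · exact h
    · omega
  · intro h; exact Or.inl ⟨h, hk⟩

lemma mem_excSet_neg {T : Set ℤ} {k : ℤ} (hk : k < 0) : k ∈ excSet T ↔ k ∉ T := by
  simp only [excSet, Set.mem_union, mem_posPart, mem_negPart]
  constructor
  · rintro (⟨h', h⟩ | ⟨h', h⟩)
    · omega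
    · exact h
  · intro h; exact Or.inr ⟨hk, h⟩

def flipS (k : ℤ) (T : Set ℤ) : Set ℤ := if 0 ≤ k then T \ {k} else insert k T

lemma posPart_flip_nonneg {T : Set ℤ} {k : ℤ} (hk : 0 ≤ k) :
    posPart (flipS k T) = posPart T \ {k} := by
  simp only [flipS, if_pos hk]
  ext m; simp only [mem_posPart, Set.mem_diff, Set.mem_singleton_iff]; tauto

lemma negPart_flip_nonneg {T : Set ℤ} {k : ℤ} (hk : 0 ≤ k) :
    negPart (flipS k T) = negPart T := by
  simp only [flipS, if_pos hk]
  ext m; simp only [mem_negPart, Set.mem_diff, Set.mem_singleton_iff]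
  constructor
  · rintro ⟨h1, h2⟩; exact ⟨h1, fun h => h2 ⟨h, by omega⟩⟩
  · rintro ⟨h1, h2⟩; exact ⟨h1, fun h => h2 h.1⟩

lemma posPart_flip_neg {T : Set ℤ} {k : ℤ} (hk : ¬ 0 ≤ k) :
    posPart (flipS k T) = posPart T := by
  simp only [flipS, if_neg hk]
  ext m; simp only [mem_posPart, Set.mem_insert_iff]
  constructor
  · rintro ⟨h1 | h1, h2⟩
    · omega
    · exact ⟨h1, h2⟩
  · rintro ⟨h1, h2⟩; exact ⟨Or.inr h1, h2⟩

lemma negPart_flip_neg {T : Set ℤ} {k : ℤ} (hk : ¬ 0 ≤ k) :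
    negPart (flipS k T) = negPart T \ {k} := by
  simp only [flipS, if_neg hk]
  ext m; simp only [mem_negPart, Set.mem_diff, Set.mem_singleton_iff, Set.mem_insert_iff]
  tauto

lemma admissible_flip {T : Set ℤ} (hT : Admissible T) (k : ℤ) : Admissible (flipS k T) := by
  by_cases hk : 0 ≤ k
  · exact ⟨by rw [posPart_flip_nonneg hk]; exact hT.1.diff,
      by rw [negPart_flip_nonneg hk]; exact hT.2⟩
  · exact ⟨by rw [posPart_flip_neg hk]; exact hT.1,
      by rw [negPart_flip_neg hk]; exact hT.2.diff⟩

lemma excSet_flip {T : Set ℤ} {k : ℤ} (hk : k ∈ excSet T) :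
    excSet (flipS k T) = excSet T \ {k} := by
  by_cases h : 0 ≤ k
  · rw [excSet, posPart_flip_nonneg h, negPart_flip_nonneg h, excSet, Set.union_diff_distrib]
    congr 1
    rw [Set.diff_singleton_eq_self]
    rw [mem_negPart]; push_neg; intro hc; omega
  · rw [excSet, posPart_flip_neg h, negPart_flip_neg h, excSet, Set.union_diff_distrib]
    congr 1
    rw [Set.diff_singleton_eq_self]
    rw [mem_posPart]; push_neg; intro hc; omega

def rnk (T : Set ℤ) (k : ℤ) : ℕ := (excSet T ∩ {m | k < m}).ncard

lemma rnk_flip {T : Set ℤ} {k l : ℤ} (hT : Admissible T) (hk : k ∈ excSet T) (hlk : l < k) :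
    rnk (flipS k T) l + 1 = rnk T l := by
  rw [rnk, rnk, excSet_flip hk]
  have : excSet T \ {k} ∩ {m | l < m} = (excSet T ∩ {m | l < m}) \ {k} := by
    ext m; simp only [Set.mem_inter_iff, Set.mem_diff, Set.mem_singleton_iff, Set.mem_setOf_eq]
    tauto
  rw [this]
  exact Set.ncard_diff_singleton_add_one ⟨hk, hlk⟩ ((excSet_finite hT).inter_of_left _)

lemma negOne_zpow_eq (a b : ℤ) (h : a % 2 = b % 2) : (-1 : ℂ) ^ a = (-1 : ℂ) ^ b := by
  have h2 : (2 : ℤ) ∣ a - b := by omega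
  obtain ⟨c, hc⟩ := h2
  have : a = b + 2 * c := by omega
  rw [this, zpow_add₀ (by norm_num : (-1:ℂ) ≠ 0), zpow_mul]
  norm_num

noncomputable def scal (v t : ℝ) (k : ℤ) : ℝ :=
  if 0 ≤ k then Real.sqrt t * v ^ ((k : ℝ) + 1/2) else (Real.sqrt t)⁻¹ * v ^ (-(k : ℝ) - 1/2)

lemma jcount_eq_rnk_nonneg {T : Set ℤ} {k : ℤ} (hk : 0 ≤ k) : jcount T k = rnk T k := by
  rw [jcount, rnk]
  congr 1
  ext m
  simp only [Set.mem_inter_iff, Set.mem_setOf_eq, excSet, Set.mem_union, mem_posPart,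
    mem_negPart]
  constructor
  · rintro ⟨h1, h2⟩; exact ⟨Or.inl ⟨h1, by omega⟩, h2⟩
  · rintro ⟨h1 | h1, h2⟩
    · exact ⟨h1.1, h2⟩
    · omega

lemma jcount_neg_parity {T : Set ℤ} {k : ℤ} (hT : Admissible T) (hk : k < 0) :
    jcount T k + (negPart T ∩ {m | k < m}).ncard
      = (posPart T).ncard + (-k - 1).toNat ∧
    rnk T k = (posPart T).ncard + (negPart T ∩ {m | k < m}).ncard := by
  constructor
  · -- T ∩ Ioi k = posPart T ∪ (Set.Ioo k 0 \ negPart T),  Ioo k 0 = (T∩Ioo) ⊔ (negPart∩Ioi k)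
    have hsplit : T ∩ {m | k < m} = posPart T ∪ (T ∩ Set.Ioo k 0) := by
      ext m
      simp only [Set.mem_inter_iff, Set.mem_setOf_eq, Set.mem_union, mem_posPart, Set.mem_Ioo]
      constructor
      · rintro ⟨h1, h2⟩
        rcases le_or_gt 0 m with h | h
        · exact Or.inl ⟨h1, h⟩
        · exact Or.inr ⟨h1, h2, h⟩
      · rintro (⟨h1, h2⟩ | ⟨h1, h2, h3⟩)
        · exact ⟨h1, by omega⟩
        · exact ⟨h1, h2⟩
    have hIoo : Set.Ioo k 0 = (T ∩ Set.Ioo k 0) ∪ (negPart T ∩ {m | k < m}) := by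
      ext m
      simp only [Set.mem_inter_iff, Set.mem_Ioo, Set.mem_union, mem_negPart, Set.mem_setOf_eq]
      constructor
      · rintro ⟨h1, h2⟩
        by_cases hm : m ∈ T
        · exact Or.inl ⟨hm, h1, h2⟩
        · exact Or.inr ⟨⟨h2, hm⟩, h1⟩
      · rintro (⟨h1, h2⟩ | ⟨⟨h1, h2⟩, h3⟩)
        · exact h2
        · exact ⟨h3, h1⟩
    have hfin1 : (T ∩ Set.Ioo k 0).Finite := (Set.finite_Ioo k 0).inter_of_right _
    have hfin2 : (negPart T ∩ {m | k < m}).Finite := hT.2.inter_of_left _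
    have hdisj1 : Disjoint (posPart T) (T ∩ Set.Ioo k 0) := by
      rw [Set.disjoint_left]
      rintro a ⟨_, h0⟩ ⟨_, _, h1⟩
      simp only [Set.mem_setOf_eq] at h0; omega
    have hdisj2 : Disjoint (T ∩ Set.Ioo k 0) (negPart T ∩ {m | k < m}) := by
      rw [Set.disjoint_left]
      rintro a ⟨h0, _⟩ ⟨⟨_, h1⟩, _⟩
      exact h1 h0
    have e1 : jcount T k = (posPart T).ncard + (T ∩ Set.Ioo k 0).ncard := by
      rw [jcount, hsplit, Set.ncard_union_eq hdisj1 hT.1 hfin1]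
    have e2 : (Set.Ioo k 0).ncard = (T ∩ Set.Ioo k 0).ncard + (negPart T ∩ {m | k < m}).ncard := by
      rw [hIoo, Set.ncard_union_eq hdisj2 hfin1 hfin2]
      rw [← hIoo]
    have e3 : (Set.Ioo k 0).ncard = (-k - 1).toNat := by
      rw [← Finset.coe_Ioo, Set.ncard_coe_finset, Int.card_Ioo]
      omega
    omega
  · rw [rnk]
    have : excSet T ∩ {m | k < m} = posPart T ∪ (negPart T ∩ {m | k < m}) := by
      ext m
      simp only [Set.mem_inter_iff, Set.mem_setOf_eq, excSet, Set.mem_union, mem_posPart,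
        mem_negPart]
      constructor
      · rintro ⟨h1 | h1, h2⟩
        · exact Or.inl h1
        · exact Or.inr ⟨h1, h2⟩
      · rintro (⟨h1, h2⟩ | ⟨h1, h2⟩)
        · exact ⟨Or.inl ⟨h1, h2⟩, by omega⟩
        · exact ⟨Or.inr h1, h2⟩
    rw [this, Set.ncard_union_eq _ hT.1 (hT.2.inter_of_left _)]
    rw [Set.disjoint_left]
    rintro a ⟨_, h0⟩ ⟨⟨h1, _⟩, _⟩
    simp only [Set.mem_setOf_eq] at h0 h1; omega

lemma psit_eval {v t : ℝ} {T : Set ℤ} (hT : Admissible T) (k : ℤ) (f : Set ℤ → ℂ) :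
    psitAct v t k f T =
      if k ∈ excSet T then (-1 : ℂ) ^ rnk T k * (scal v t k : ℂ) * f (flipS k T) else 0 := by
  by_cases hk : 0 ≤ k
  · rw [psitAct, if_pos hk, psiAct]
    by_cases hkT : k ∈ T
    · rw [if_pos hkT, if_pos ((mem_excSet_nonneg hk).2 hkT)]
      rw [jcount_eq_rnk_nonneg hk, scal, if_pos hk, flipS, if_pos hk]
      push_cast
      ring
    · rw [if_neg hkT, if_neg (fun h => hkT ((mem_excSet_nonneg hk).1 h)), mul_zero]
  · rw [psitAct, if_neg hk, psiStarAct]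
    by_cases hkT : k ∈ T
    · rw [if_neg (by simpa using hkT), if_neg (by rw [mem_excSet_neg (by omega)]; simpa using hkT),
        mul_zero]
    · rw [if_pos hkT, if_pos ((mem_excSet_neg (by omega)).2 hkT)]
      rw [scal, if_neg hk, flipS, if_neg hk]
      obtain ⟨h1, h2⟩ := jcount_neg_parity hT (by omega : k < 0)
      have hsign : (-1 : ℂ) ^ (k + 1) * (-1 : ℂ) ^ jcount T k = (-1 : ℂ) ^ rnk T k := by
        rw [show ((-1 : ℂ) ^ jcount T k) = (-1 : ℂ) ^ (jcount T k : ℤ) from (zpow_natCast _ _).symm,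
          show ((-1 : ℂ) ^ rnk T k) = (-1 : ℂ) ^ (rnk T k : ℤ) from (zpow_natCast _ _).symm,
          ← zpow_add₀ (by norm_num : (-1:ℂ) ≠ 0)]
        exact negOne_zpow_eq _ _ (by omega)
      calc (-1 : ℂ) ^ (k + 1) * ((((Real.sqrt t)⁻¹ * v ^ (-(k : ℝ) - 1/2) : ℝ)) : ℂ) *
            ((-1 : ℂ) ^ jcount T k * f (insert k T))
          = ((-1 : ℂ) ^ (k + 1) * (-1 : ℂ) ^ jcount T k) *
            ((((Real.sqrt t)⁻¹ * v ^ (-(k : ℝ) - 1/2) : ℝ)) : ℂ) * f (insert k T) := by ring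
        _ = _ := by rw [hsign]

lemma term_eval {v t : ℝ} {T : Set ℤ} (hT : Admissible T) {k l : ℤ} (hlk : l < k)
    (f : Set ℤ → ℂ) :
    psitAct v t k (psitAct v t l f) T =
      if k ∈ excSet T ∧ l ∈ excSet T then
        (-1 : ℂ) ^ (rnk T k + rnk T l + 1) * ((scal v t k * scal v t l : ℝ) : ℂ) *
          f (flipS l (flipS k T))
      else 0 := by
  rw [psit_eval hT k _]
  by_cases hk : k ∈ excSet T
  · rw [if_pos hk, psit_eval (admissible_flip hT k) l f]
    by_cases hl : l ∈ excSet T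
    · have hl' : l ∈ excSet (flipS k T) := by
        rw [excSet_flip hk]; exact ⟨hl, by simp; omega⟩
      rw [if_pos hl', if_pos ⟨hk, hl⟩]
      have hr := rnk_flip hT hk hlk
      have hsign : (-1 : ℂ) ^ rnk T k * (-1 : ℂ) ^ rnk (flipS k T) l
          = (-1 : ℂ) ^ (rnk T k + rnk T l + 1) := by
        rw [← pow_add, show ((-1 : ℂ) ^ (rnk T k + rnk (flipS k T) l)) =
            (-1 : ℂ) ^ ((rnk T k + rnk (flipS k T) l : ℕ) : ℤ) from (zpow_natCast _ _).symm,
          show ((-1 : ℂ) ^ (rnk T k + rnk T l + 1)) =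
            (-1 : ℂ) ^ ((rnk T k + rnk T l + 1 : ℕ) : ℤ) from (zpow_natCast _ _).symm]
        exact negOne_zpow_eq _ _ (by omega)
      push_cast
      calc (-1:ℂ) ^ rnk T k * (scal v t k : ℂ) *
            ((-1:ℂ) ^ rnk (flipS k T) l * (scal v t l : ℂ) * f (flipS l (flipS k T)))
          = ((-1:ℂ) ^ rnk T k * (-1:ℂ) ^ rnk (flipS k T) l) *
            ((scal v t k : ℂ) * (scal v t l : ℂ)) * f (flipS l (flipS k T)) := by ring
        _ = _ := by rw [hsign]
    · have hl' : l ∉ excSet (flipS k T) := by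
        rw [excSet_flip hk]; exact fun h => hl h.1
      rw [if_neg hl', if_neg (fun h => hl h.2), mul_zero]
  · rw [if_neg hk, if_neg (fun h => hk h.1)]

lemma XAct_eval {v t : ℝ} {T : Set ℤ} (hT : Admissible T) (f : Set ℤ → ℂ) :
    XAct v t f T = ∑ k ∈ (excSet_finite hT).toFinset, ∑ l ∈ (excSet_finite hT).toFinset,
      if l < k then
        (-1 : ℂ) ^ (rnk T k + rnk T l + 1) * ((scal v t k * scal v t l : ℝ) : ℂ) *
          f (flipS l (flipS k T))
      else 0 := by
  rw [XAct]
  rw [tsum_eq_sum (s := (excSet_finite hT).toFinset ×ˢ (excSet_finite hT).toFinset) ?_]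
  · rw [Finset.sum_product]
    refine Finset.sum_congr rfl fun k hk => Finset.sum_congr rfl fun l hl => ?_
    simp only [Set.Finite.mem_toFinset] at hk hl
    by_cases hlk : l < k
    · rw [if_pos hlk, if_pos hlk, term_eval hT hlk f, if_pos ⟨hk, hl⟩]
    · rw [if_neg hlk, if_neg hlk]
  · rintro ⟨k, l⟩ hq
    simp only [Finset.mem_product, Set.Finite.mem_toFinset, not_and_or] at hq
    by_cases hlk : l < k
    · rw [if_pos hlk, term_eval hT hlk f, if_neg (by tauto)]
    · rw [if_neg hlk]

lemma sum_diff_singleton {S : Set ℤ} (hS : S.Finite) {k : ℤ} (hk : k ∈ S) (f : ℤ → ℝ) :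
    ∑ᶠ m ∈ S \ {k}, f m = (∑ᶠ m ∈ S, f m) - f k := by
  rw [finsum_mem_eq_finite_toFinset_sum f hS, finsum_mem_eq_finite_toFinset_sum f hS.diff]
  rw [Set.Finite.toFinset_sdiff hS (Set.finite_singleton k) hS.diff]
  have hk' : k ∈ hS.toFinset := hS.mem_toFinset.2 hk
  rw [show hS.toFinset \ (Set.finite_singleton k).toFinset = hS.toFinset.erase k by
    simp [Finset.erase_eq]]
  have := Finset.add_sum_erase hS.toFinset f hk'
  linarith

lemma charge_flip {T : Set ℤ} (hT : Admissible T) {k : ℤ} (hk : k ∈ excSet T) :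
    charge (flipS k T) = charge T + (if 0 ≤ k then -1 else 1) := by
  by_cases h : 0 ≤ k
  · rw [if_pos h, charge, charge, posPart_flip_nonneg h, negPart_flip_nonneg h]
    have hkp : k ∈ posPart T := ⟨(mem_excSet_nonneg h).1 hk, h⟩
    have := Set.ncard_diff_singleton_add_one hkp hT.1
    omega
  · rw [if_neg h, charge, charge, posPart_flip_neg h, negPart_flip_neg h]
    have hkn : k ∈ negPart T := ⟨by simp; omega, (mem_excSet_neg (by omega)).1 hk⟩
    have := Set.ncard_diff_singleton_add_one hkn hT.2
    omega

lemma energy_flip {T : Set ℤ} (hT : Admissible T) {k : ℤ} (hk : k ∈ excSet T) :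
    energy (flipS k T) = energy T - (if 0 ≤ k then (k : ℝ) + 1/2 else -(k : ℝ) - 1/2) := by
  by_cases h : 0 ≤ k
  · rw [if_pos h, energy, energy, posPart_flip_nonneg h, negPart_flip_nonneg h]
    have hkp : k ∈ posPart T := ⟨(mem_excSet_nonneg h).1 hk, h⟩
    rw [sum_diff_singleton hT.1 hkp]
    ring
  · rw [if_neg h, energy, energy, posPart_flip_neg h, negPart_flip_neg h]
    have hkn : k ∈ negPart T := ⟨by simp; omega, (mem_excSet_neg (by omega)).1 hk⟩
    rw [sum_diff_singleton hT.2 hkn]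
    ring

lemma energy_nonneg {T : Set ℤ} (hT : Admissible T) : 0 ≤ energy T := by
  rw [energy, sub_nonneg]
  have h1 : ∑ᶠ m ∈ posPart T, ((m : ℝ) + 1/2) ≥ 0 := by
    rw [finsum_mem_eq_finite_toFinset_sum _ hT.1]
    apply Finset.sum_nonneg
    intro i hi
    have : i ∈ posPart T := hT.1.mem_toFinset.1 hi
    have := this.2
    simp only [Set.mem_setOf_eq] at this
    have h'' : (0:ℝ) ≤ (i:ℝ) := by exact_mod_cast this
    linarith
  have h2 : ∑ᶠ m ∈ negPart T, ((m : ℝ) + 1/2) ≤ 0 := by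
    rw [finsum_mem_eq_finite_toFinset_sum _ hT.2]
    apply Finset.sum_nonpos
    intro i hi
    have : i ∈ negPart T := hT.2.mem_toFinset.1 hi
    have h' : i < 0 := this.1
    have : (i : ℝ) ≤ -1 := by exact_mod_cast (by omega : i ≤ -1)
    linarith
  linarith

lemma even_charge_iff {T : Set ℤ} (hT : Admissible T) :
    Even (charge T) ↔ Even (excSet T).ncard := by
  rw [charge, excSet, Set.ncard_union_eq (posPart_negPart_disjoint T) hT.1 hT.2]
  rw [Int.even_sub, Nat.even_add, Int.even_coe_nat, Int.even_coe_nat]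

lemma rpow_merge {v : ℝ} (hv0 : 0 ≤ v) {a b E2 : ℝ} (ha : 0 < a) (hb : 0 < b)
    (hE : 0 ≤ E2) : v ^ a * v ^ b * v ^ E2 = v ^ (a + b + E2) := by
  have h1 : v ^ (a + b + E2) = v ^ (a + b) * v ^ E2 := Real.rpow_add' hv0 (by linarith)
  have h2 : v ^ (a + b) = v ^ a * v ^ b := Real.rpow_add' hv0 (by linarith)
  rw [h1, h2]

lemma scal_mul_fbCoeff {v t : ℝ} (hv0 : 0 ≤ v) (ht : 0 < t) {T : Set ℤ} (hT : Admissible T)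
    {k l : ℤ} (hk : k ∈ excSet T) (hl : l ∈ excSet T) (hlk : l < k) (hev : Even (charge T)) :
    ((scal v t k * scal v t l : ℝ) : ℂ) * fbCoeff v t (flipS l (flipS k T)) = fbCoeff v t T := by
  have hT1 : Admissible (flipS k T) := admissible_flip hT k
  have hT2 : Admissible (flipS l (flipS k T)) := admissible_flip hT1 l
  have hl1 : l ∈ excSet (flipS k T) := by
    rw [excSet_flip hk]
    exact ⟨hl, by simp only [Set.mem_singleton_iff]; omega⟩
  have hc1 := charge_flip hT hk
  have hc2 := charge_flip hT1 hl1
  have he1 := energy_flip hT hk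
  have he2 := energy_flip hT1 hl1
  have hE2 : 0 ≤ energy (flipS l (flipS k T)) := energy_nonneg hT2
  obtain ⟨r, hr⟩ := hev
  have hev' : Even (charge T) := ⟨r, hr⟩
  have hev2 : Even (charge (flipS l (flipS k T))) := by
    rw [hc2, hc1, hr]
    by_cases h1 : 0 ≤ k <;> by_cases h2 : 0 ≤ l <;> simp only [h1, h2, if_true, if_false,
      if_pos, if_neg, not_false_iff]
    · exact ⟨r - 1, by ring⟩
    · exact ⟨r, by ring⟩
    · exact ⟨r, by omega⟩
    · exact ⟨r + 1, by ring⟩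
  rw [fbCoeff, fbCoeff, if_pos hev2, if_pos hev']
  rw [← Complex.ofReal_mul]
  congr 1
  -- now a real identity
  have hek : ∀ m : ℤ, 0 < (if 0 ≤ m then (m : ℝ) + 1/2 else -(m : ℝ) - 1/2) := by
    intro m
    by_cases hm : 0 ≤ m <;> simp only [hm, if_true, if_false]
    · have : (0:ℝ) ≤ (m:ℝ) := by exact_mod_cast hm
      linarith
    · have : (m:ℝ) ≤ -1 := by exact_mod_cast (by omega : m ≤ -1)
      linarith
  have hvpart : v ^ (if 0 ≤ k then (k : ℝ) + 1/2 else -(k : ℝ) - 1/2) *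
      v ^ (if 0 ≤ l then (l : ℝ) + 1/2 else -(l : ℝ) - 1/2) *
      v ^ energy (flipS l (flipS k T)) = v ^ energy T := by
    rw [rpow_merge hv0 (hek k) (hek l) hE2, he2, he1]
    ring_nf
  have hsq : Real.sqrt t * Real.sqrt t = t := Real.mul_self_sqrt ht.le
  have htne : t ≠ 0 := ht.ne'
  set s := Real.sqrt t with hs
  set W := t ^ (charge (flipS l (flipS k T)) / 2) with hW
  set R := v ^ energy (flipS l (flipS k T)) with hR
  set V := v ^ energy T with hV
  by_cases h1 : 0 ≤ k <;> by_cases h2 : 0 ≤ l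
  · have hd : charge T / 2 = charge (flipS l (flipS k T)) / 2 + 1 := by
      rw [hc2, hc1]; simp only [h1, h2, if_true]; omega
    have hdd : t ^ (charge T / 2) = W * t := by
      rw [hd, hW, zpow_add₀ htne, zpow_one]
    rw [scal, scal, if_pos h1, if_pos h2, hdd]
    simp only [h1, h2, if_true] at hvpart
    set P := v ^ ((k:ℝ) + 1/2)
    set Q := v ^ ((l:ℝ) + 1/2)
    linear_combination (P * Q * R * W) * hsq + (t * W) * hvpart
  · have hd : charge T / 2 = charge (flipS l (flipS k T)) / 2 := by
      rw [hc2, hc1]; simp only [h1, h2, if_true, if_false]; omega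
    have hdd : t ^ (charge T / 2) = W := by rw [hd]
    rw [scal, scal, if_pos h1, if_neg h2, hdd]
    simp only [h1, h2, if_true, if_false] at hvpart
    set P := v ^ ((k:ℝ) + 1/2)
    set Q := v ^ (-(l:ℝ) - 1/2)
    have hs' : s * s⁻¹ = 1 := by
      rw [mul_inv_cancel₀]
      rw [hs]
      exact (Real.sqrt_pos.2 ht).ne'
    linear_combination (P * Q * R * W) * hs' + W * hvpart
  · omega
  · have hd : charge (flipS l (flipS k T)) / 2 = charge T / 2 + 1 := by
      rw [hc2, hc1]; simp only [h1, h2, if_false]; omega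
    have hdd : W = t ^ (charge T / 2) * t := by
      rw [hW, hd, zpow_add₀ htne, zpow_one]
    rw [scal, scal, if_neg h1, if_neg h2, hdd]
    simp only [h1, h2, if_false] at hvpart
    set P := v ^ (-(k:ℝ) - 1/2)
    set Q := v ^ (-(l:ℝ) - 1/2)
    have hs' : s⁻¹ * s⁻¹ * t = 1 := by
      rw [← mul_inv, hsq]
      field_simp
    set W0 := t ^ (charge T / 2)
    linear_combination (P * Q * R * W0) * hs' + W0 * hvpart

def rF (F : Finset ℤ) (k : ℤ) : ℕ := (F.filter (fun m => k < m)).card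

lemma rF_erase_min {F : Finset ℤ} (hne : F.Nonempty) {k : ℤ} (hk : k ∈ F.erase (F.min' hne)) :
    rF (F.erase (F.min' hne)) k = rF F k := by
  rw [rF, rF, Finset.filter_erase]
  rw [Finset.erase_eq_of_notMem]
  simp only [Finset.mem_filter, not_and]
  intro _
  have h1 : F.min' hne ≤ k := F.min'_le k (Finset.mem_of_mem_erase hk)
  omega

lemma rF_min {F : Finset ℤ} (hne : F.Nonempty) :
    rF F (F.min' hne) = (F.erase (F.min' hne)).card := by
  rw [rF]
  congr 1
  ext x
  simp only [Finset.mem_filter, Finset.mem_erase]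
  constructor
  · rintro ⟨h1, h2⟩; exact ⟨by omega, h1⟩
  · rintro ⟨h1, h2⟩
    have := F.min'_le x h2
    exact ⟨h2, by omega⟩

lemma sumA : ∀ (n : ℕ) (F : Finset ℤ), F.card = n →
    ∑ k ∈ F, (-1 : ℂ) ^ (rF F k) = if Even n then 0 else 1 := by
  intro n
  induction n with
  | zero =>
    intro F hF
    rw [Finset.card_eq_zero] at hF
    simp [hF]
  | succ n ih =>
    intro F hF
    have hne : F.Nonempty := by rw [← Finset.card_pos]; omega
    set mn := F.min' hne with hmn
    have hmem : mn ∈ F := F.min'_mem hne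
    have hcard : (F.erase mn).card = n := by rw [Finset.card_erase_of_mem hmem]; omega
    rw [← Finset.add_sum_erase F _ hmem]
    have hsum : ∑ k ∈ F.erase mn, (-1 : ℂ) ^ (rF F k) =
        ∑ k ∈ F.erase mn, (-1 : ℂ) ^ (rF (F.erase mn) k) :=
      Finset.sum_congr rfl fun k hk => by rw [rF_erase_min hne hk]
    rw [hsum, ih _ hcard, rF_min hne, hcard]
    rcases Nat.even_or_odd n with h | h
    · rw [if_pos h, if_neg (by simp [Nat.even_add_one, h]), h.neg_one_pow, add_zero]
    · rw [if_neg (Nat.not_even_iff_odd.2 h),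
        if_pos (by simp [Nat.even_add_one, Nat.not_even_iff_odd.2 h]), h.neg_one_pow]
      ring

lemma sumS : ∀ (n : ℕ) (F : Finset ℤ), F.card = n →
    ∑ k ∈ F, ∑ l ∈ F, (if l < k then (-1 : ℂ) ^ (rF F k + rF F l + 1) else 0)
      = ((n / 2 : ℕ) : ℂ) := by
  intro n
  induction n with
  | zero =>
    intro F hF
    rw [Finset.card_eq_zero] at hF
    simp [hF]
  | succ n ih =>
    intro F hF
    have hne : F.Nonempty := by rw [← Finset.card_pos]; omega
    set mn := F.min' hne with hmn
    have hmem : mn ∈ F := F.min'_mem hne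
    have hcard : (F.erase mn).card = n := by rw [Finset.card_erase_of_mem hmem]; omega
    have hminle : ∀ l ∈ F, ¬ l < mn := fun l hl => not_lt.2 (F.min'_le l hl)
    rw [← Finset.add_sum_erase F _ hmem]
    have h0 : ∑ l ∈ F, (if l < mn then (-1 : ℂ) ^ (rF F mn + rF F l + 1) else 0) = 0 :=
      Finset.sum_eq_zero fun l hl => if_neg (hminle l hl)
    rw [h0, zero_add]
    have hsplit : ∀ k ∈ F.erase mn,
        ∑ l ∈ F, (if l < k then (-1 : ℂ) ^ (rF F k + rF F l + 1) else 0)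
        = (-1 : ℂ) ^ (rF (F.erase mn) k + n + 1)
          + ∑ l ∈ F.erase mn,
              (if l < k then (-1 : ℂ) ^ (rF (F.erase mn) k + rF (F.erase mn) l + 1) else 0) := by
      intro k hk
      rw [← Finset.add_sum_erase F _ hmem]
      have hmnk : mn < k := by
        have h1 := F.min'_le k (Finset.mem_of_mem_erase hk)
        have h2 := (Finset.mem_erase.1 hk).1
        omega
      rw [if_pos hmnk, rF_min hne, hcard, rF_erase_min hne hk]
      congr 1
      refine Finset.sum_congr rfl fun l hl => ?_
      by_cases hlk : l < k
      · rw [if_pos hlk, if_pos hlk, rF_erase_min hne hl]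
      · rw [if_neg hlk, if_neg hlk]
    rw [Finset.sum_congr rfl hsplit, Finset.sum_add_distrib, ih _ hcard]
    have hA : ∑ k ∈ F.erase mn, (-1 : ℂ) ^ (rF (F.erase mn) k + n + 1)
        = (-1 : ℂ) ^ (n + 1) * ∑ k ∈ F.erase mn, (-1 : ℂ) ^ (rF (F.erase mn) k) := by
      rw [Finset.mul_sum]
      refine Finset.sum_congr rfl fun k _ => ?_
      rw [← pow_add]
      ring_nf
    rw [hA, sumA _ _ hcard]
    rcases Nat.even_or_odd n with h | h
    · obtain ⟨c, hc⟩ := h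
      rw [if_pos ⟨c, hc⟩, mul_zero, zero_add]
      congr 1
      omega
    · rw [if_neg (Nat.not_even_iff_odd.2 h), mul_one,
        (by simpa using h.add_one : Even (n + 1)).neg_one_pow]
      obtain ⟨c, hc⟩ := h
      have h2 : (n + 1) / 2 = n / 2 + 1 := by omega
      rw [h2]
      push_cast
      ring

lemma rnk_eq_rF {T : Set ℤ} (hT : Admissible T) (k : ℤ) :
    rnk T k = rF (excSet_finite hT).toFinset k := by
  rw [rnk, rF, ← Set.ncard_coe_finset, Finset.coe_filter]
  congr 1
  ext m
  simp [Set.Finite.mem_toFinset]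

lemma ncard_excSet_flip2 {T : Set ℤ} (hT : Admissible T) {k l : ℤ}
    (hk : k ∈ excSet T) (hl : l ∈ excSet T) (hlk : l < k) :
    (excSet (flipS l (flipS k T))).ncard + 2 = (excSet T).ncard := by
  have hl1 : l ∈ excSet (flipS k T) := by
    rw [excSet_flip hk]
    exact ⟨hl, by simp only [Set.mem_singleton_iff]; omega⟩
  rw [excSet_flip hl1, excSet_flip hk]
  have e1 := Set.ncard_diff_singleton_add_one hl1 (by
    rw [excSet_flip hk]; exact ((excSet_finite hT).diff))
  have e2 := Set.ncard_diff_singleton_add_one hk (excSet_finite hT)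
  rw [excSet_flip hk] at e1
  omega

lemma excSet_empty_iff {T : Set ℤ} (hT : Admissible T) :
    (excSet T).ncard = 0 ↔ T = {m : ℤ | m < 0} := by
  constructor
  · intro h
    have he : excSet T = ∅ := (Set.ncard_eq_zero (excSet_finite hT)).1 h
    ext m
    simp only [Set.mem_setOf_eq]
    constructor
    · intro hm
      by_contra hc
      push_neg at hc
      have : m ∈ excSet T := Or.inl ⟨hm, hc⟩
      rw [he] at this; exact this
    · intro hm
      by_contra hc
      have : m ∈ excSet T := Or.inr ⟨hm, hc⟩
      rw [he] at this; exact this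
  · intro h
    subst h
    have : excSet {m : ℤ | m < 0} = ∅ := by
      ext m
      simp only [Set.mem_empty_iff_false, iff_false]
      rintro (⟨h1, h2⟩ | ⟨h1, h2⟩)
      · have : m < 0 := h1
        have : (0:ℤ) ≤ m := h2
        omega
      · exact h2 h1
    rw [this, Set.ncard_empty]

lemma fbCoeff_vac (v t : ℝ) : fbCoeff v t {m : ℤ | m < 0} = 1 := by
  have hpos : posPart {m : ℤ | m < 0} = ∅ := by
    ext m
    simp only [Set.mem_empty_iff_false, iff_false]
    rintro ⟨h1, h2⟩
    have : m < 0 := h1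
    have : (0:ℤ) ≤ m := h2
    omega
  have hneg : negPart {m : ℤ | m < 0} = ∅ := by
    ext m
    simp only [Set.mem_empty_iff_false, iff_false]
    rintro ⟨h1, h2⟩
    exact h2 h1
  have hch : charge {m : ℤ | m < 0} = 0 := by
    rw [charge, hpos, hneg, Set.ncard_empty]; ring
  have hen : energy {m : ℤ | m < 0} = 0 := by
    rw [energy, hpos, hneg, finsum_mem_empty]; ring
  rw [fbCoeff, if_pos (by rw [hch]; exact Even.zero), hch, hen]
  norm_num

lemma iter_eval {v t : ℝ} (hv0 : 0 ≤ v) (ht : 0 < t) :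
    ∀ (m : ℕ) (T : Set ℤ), Admissible T →
      ((XAct v t)^[m] vacVec) T =
        if (excSet T).ncard = 2 * m then (m.factorial : ℂ) * fbCoeff v t T else 0 := by
  intro m
  induction m with
  | zero =>
    intro T hT
    simp only [Function.iterate_zero, id_eq, Nat.factorial_zero, Nat.cast_one, one_mul,
      mul_zero]
    rw [vacVec]
    by_cases h : T = {m : ℤ | m < 0}
    · rw [if_pos h, if_pos (by have h0 := (excSet_empty_iff hT).2 h; omega), h, fbCoeff_vac]
    · rw [if_neg h, if_neg (fun hc => h ((excSet_empty_iff hT).1 (by omega)))]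
  | succ m ih =>
    intro T hT
    rw [Function.iterate_succ_apply', XAct_eval hT]
    set F := (excSet_finite hT).toFinset with hF
    have hcardF : F.card = (excSet T).ncard := by
      rw [hF, ← Set.ncard_coe_finset, Set.Finite.coe_toFinset]
    by_cases hn : (excSet T).ncard = 2 * (m + 1)
    · rw [if_pos hn]
      have hev : Even (charge T) := (even_charge_iff hT).2 ⟨m + 1, by omega⟩
      have hterm : ∀ k ∈ F, ∀ l ∈ F,
          (if l < k then
            (-1 : ℂ) ^ (rnk T k + rnk T l + 1) * ((scal v t k * scal v t l : ℝ) : ℂ) *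
              ((XAct v t)^[m] vacVec) (flipS l (flipS k T))
          else 0)
          = (if l < k then (-1 : ℂ) ^ (rF F k + rF F l + 1) else 0) *
              ((m.factorial : ℂ) * fbCoeff v t T) := by
        intro k hk l hl
        rw [hF, Set.Finite.mem_toFinset] at hk hl
        by_cases hlk : l < k
        · rw [if_pos hlk, if_pos hlk]
          have hT2 : Admissible (flipS l (flipS k T)) :=
            admissible_flip (admissible_flip hT k) l
          have hcount := ncard_excSet_flip2 hT hk hl hlk
          rw [ih _ hT2, if_pos (by omega)]
          rw [rnk_eq_rF hT k, rnk_eq_rF hT l]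
          calc (-1 : ℂ) ^ (rF F k + rF F l + 1) * ((scal v t k * scal v t l : ℝ) : ℂ) *
                ((m.factorial : ℂ) * fbCoeff v t (flipS l (flipS k T)))
              = (-1 : ℂ) ^ (rF F k + rF F l + 1) * ((m.factorial : ℂ) *
                  (((scal v t k * scal v t l : ℝ) : ℂ) * fbCoeff v t (flipS l (flipS k T)))) := by
                ring
            _ = _ := by rw [scal_mul_fbCoeff hv0 ht hT hk hl hlk hev]
        · rw [if_neg hlk, if_neg hlk, zero_mul]
      calc ∑ k ∈ F, ∑ l ∈ F, (if l < k then
              (-1 : ℂ) ^ (rnk T k + rnk T l + 1) * ((scal v t k * scal v t l : ℝ) : ℂ) *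
                ((XAct v t)^[m] vacVec) (flipS l (flipS k T))
            else 0)
          = ∑ k ∈ F, ∑ l ∈ F, (if l < k then (-1 : ℂ) ^ (rF F k + rF F l + 1) else 0) *
              ((m.factorial : ℂ) * fbCoeff v t T) := by
            refine Finset.sum_congr rfl fun k hk => Finset.sum_congr rfl fun l hl => ?_
            exact hterm k hk l hl
        _ = (∑ k ∈ F, ∑ l ∈ F, (if l < k then (-1 : ℂ) ^ (rF F k + rF F l + 1) else 0)) *
              ((m.factorial : ℂ) * fbCoeff v t T) := by
            rw [Finset.sum_mul]
            refine Finset.sum_congr rfl fun k _ => ?_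
            rw [Finset.sum_mul]
        _ = ((2 * (m + 1) / 2 : ℕ) : ℂ) * ((m.factorial : ℂ) * fbCoeff v t T) := by
            rw [sumS (2 * (m + 1)) F (by omega)]
        _ = ((m + 1).factorial : ℂ) * fbCoeff v t T := by
            have : (2 * (m + 1) / 2 : ℕ) = m + 1 := by omega
            rw [this, Nat.factorial_succ]
            push_cast
            ring
    · rw [if_neg hn]
      refine Finset.sum_eq_zero fun k hk => Finset.sum_eq_zero fun l hl => ?_
      rw [hF, Set.Finite.mem_toFinset] at hk hl
      by_cases hlk : l < k
      · rw [if_pos hlk]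
        have hT2 : Admissible (flipS l (flipS k T)) :=
          admissible_flip (admissible_flip hT k) l
        have hcount := ncard_excSet_flip2 hT hk hl hlk
        rw [ih _ hT2, if_neg (by omega), mul_zero]
      · rw [if_neg hlk]

theorem expX_vacuum_eq_free_boundary_state (v t : ℝ)
    (hv0 : 0 ≤ v) (hv1 : v < 1) (ht : 0 < t)
    (T : Set ℤ) (hT : Admissible T) :
    ∑' m : ℕ, ((m.factorial : ℂ))⁻¹ * ((XAct v t)^[m] vacVec) T = fbCoeff v t T := by
  have key : ∀ m : ℕ, ((m.factorial : ℂ))⁻¹ * ((XAct v t)^[m] vacVec) T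
      = if (excSet T).ncard = 2 * m then fbCoeff v t T else 0 := by
    intro m
    rw [iter_eval hv0 ht m T hT]
    by_cases h : (excSet T).ncard = 2 * m
    · rw [if_pos h, if_pos h, ← mul_assoc, inv_mul_cancel₀ (by
        exact_mod_cast Nat.factorial_ne_zero m), one_mul]
    · rw [if_neg h, if_neg h, mul_zero]
  rcases Nat.even_or_odd (excSet T).ncard with he | ho
  · obtain ⟨c, hc⟩ := he
    rw [tsum_eq_single c (fun m hm => by rw [key m, if_neg (by omega)])]
    rw [key c, if_pos (by omega)]
  · have hz : ∀ m : ℕ, ((m.factorial : ℂ))⁻¹ * ((XAct v t)^[m] vacVec) T = 0 := by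
      intro m
      rw [key m, if_neg (by obtain ⟨c, hc⟩ := ho; omega)]
    rw [tsum_eq_single 0 (fun m _ => hz m), hz 0]
    rw [fbCoeff, if_neg]
    rw [even_charge_iff hT]
    obtain ⟨c, hc⟩ := ho
    intro ⟨d, hd⟩
    omega

end
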